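/- Assume |J| = 1, the travel times τ have a differentiable convex potential Φ (τ(x) = ∇Φ(x) on ℱ), and all externality factors g_{i,p} are constant. Then for all prices λ₁ < λ₂ and all Wardrop equilibria x₁ ∈ WE(λ₁) and x₂ ∈ WE(λ₂), it holds that G(x₁) ≥ G(x₂) and Φ(x₁) ≤ Φ(x₂). -/

import Mathlib

open Finset

variable {I : Type*} [Fintype I] [DecidableEq I]
  {P : I → Type*} [∀ i, Fintype (P i)] [∀ i, DecidableEq (P i)]

/-- A flow is feasible if it is nonnegative and satisfies all demands. -/
def Feasible (d : I → ℝ) (x : ∀ i, P i → ℝ) : Prop :=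
  (∀ i p, 0 ≤ x i p) ∧ ∀ i, ∑ p, x i p = d i

/-- Wardrop equilibrium with respect to a cost function. -/
def IsWardrop (d : I → ℝ) (c : (∀ i, P i → ℝ) → ∀ i, P i → ℝ)
    (x : ∀ i, P i → ℝ) : Prop :=
  Feasible d x ∧ ∀ i p, 0 < x i p → ∀ q, c x i p ≤ c x i q

/-- Total externality for a single externality class with constant factors `g`. -/
def Gtot (g : ∀ i, P i → ℝ) (x : ∀ i, P i → ℝ) : ℝ :=
  ∑ i, ∑ p, g i p * x i p


section Aux

variable {I : Type*} [Fintype I] [DecidableEq I]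
  {P : I → Type*} [∀ i, Fintype (P i)] [∀ i, DecidableEq (P i)]

/-- Variational inequality for Wardrop equilibria. -/
lemma wardrop_vi [∀ i, Nonempty (P i)] (d : I → ℝ)
    (c : (∀ i, P i → ℝ) → ∀ i, P i → ℝ) (x y : ∀ i, P i → ℝ)
    (hx : IsWardrop d c x) (hy : Feasible d y) :
    ∑ i, ∑ p, c x i p * x i p ≤ ∑ i, ∑ p, c x i p * y i p := by
  refine Finset.sum_le_sum fun i _ => ?_
  set m := Finset.univ.inf' Finset.univ_nonempty (c x i) with hm
  have hmle : ∀ p, m ≤ c x i p := fun p => Finset.inf'_le _ (Finset.mem_univ p)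
  have hx_eq : ∑ p, c x i p * x i p = m * d i := by
    rw [← hx.1.2 i, Finset.mul_sum]
    refine Finset.sum_congr rfl fun p _ => ?_
    rcases (hx.1.1 i p).lt_or_eq with h | h
    · have hcm : c x i p = m :=
        le_antisymm (Finset.le_inf' _ _ fun q _ => hx.2 i p h q) (hmle p)
      rw [hcm]
    · rw [← h]; ring
  rw [hx_eq, ← hy.2 i, Finset.mul_sum]
  exact Finset.sum_le_sum fun p _ => mul_le_mul_of_nonneg_right (hmle p) (hy.1 i p)

/-- Every flow decomposes as a sum of scaled basis vectors. -/
lemma flow_sum_single (v : ∀ i, P i → ℝ) :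
    ∑ i, ∑ p, v i p • Pi.single (M := fun j => P j → ℝ) i (Pi.single p (1 : ℝ)) = v := by
  have h1 : ∀ i, ∑ p, v i p • Pi.single (M := fun _ : P i => ℝ) p 1 = v i := by
    intro i
    calc ∑ p, v i p • Pi.single (M := fun _ : P i => ℝ) p 1
        = ∑ p, Pi.single p (v i p) := by
          refine Finset.sum_congr rfl fun p _ => ?_
          rw [← Pi.single_smul, smul_eq_mul, mul_one]
      _ = v i := Finset.univ_sum_single (v i)
  calc ∑ i, ∑ p, v i p • Pi.single (M := fun j => P j → ℝ) i (Pi.single p (1 : ℝ))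
      = ∑ i, Pi.single i (v i) := by
        refine Finset.sum_congr rfl fun i _ => ?_
        calc ∑ p, v i p • Pi.single (M := fun j => P j → ℝ) i (Pi.single p (1 : ℝ))
            = ∑ p, Pi.single (M := fun j => P j → ℝ) i
                (v i p • Pi.single (M := fun _ : P i => ℝ) p 1) := by
              refine Finset.sum_congr rfl fun p _ => ?_
              rw [Pi.single_smul]
          _ = Pi.single i (∑ p, v i p • Pi.single (M := fun _ : P i => ℝ) p 1) :=
              (map_sum (LinearMap.single ℝ (fun j => P j → ℝ) i) _ _).symm
          _ = Pi.single i (v i) := by rw [h1 i]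
    _ = v := Finset.univ_sum_single v

/-- Gradient inequality for differentiable convex functions. -/
lemma convex_grad_ineq {E : Type*} [NormedAddCommGroup E] [NormedSpace ℝ E]
    {Φ : E → ℝ} (hdiff : Differentiable ℝ Φ) (hconv : ConvexOn ℝ Set.univ Φ)
    (x y : E) : fderiv ℝ Φ x (y - x) ≤ Φ y - Φ x := by
  set v := y - x with hv
  have h1 : HasDerivAt (fun t : ℝ => x + t • v) v 0 := by
    simpa using ((hasDerivAt_id (0 : ℝ)).smul_const v).const_add x
  have h0 : HasDerivAt (fun t : ℝ => Φ (x + t • v)) (fderiv ℝ Φ x v) 0 := by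
    have := (hdiff (x + (0 : ℝ) • v)).hasFDerivAt.comp_hasDerivAt 0 h1
    simp only [zero_smul, add_zero] at this; exact this
  have hconvf : ConvexOn ℝ Set.univ (fun t : ℝ => Φ (x + t • v)) := by
    have := hconv.comp_affineMap (AffineMap.lineMap x y)
    have heq : (fun t : ℝ => Φ (x + t • v)) = Φ ∘ (AffineMap.lineMap x y) := by
      funext t
      simp [AffineMap.lineMap_apply, hv, add_comm]
    rw [heq]
    simpa using this
  have := hconvf.le_slope_of_hasDerivAt (Set.mem_univ (0 : ℝ)) (Set.mem_univ (1 : ℝ))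
    one_pos h0
  have hslope : slope (fun t : ℝ => Φ (x + t • v)) 0 1 = Φ y - Φ x := by
    rw [slope_def_field]
    simp [hv]
  linarith [this, hslope.symm ▸ this]

end Aux

/-- for a single externality class, travel times with a differentiable
convex potential `Φ` and constant externality factors, the total externality at
equilibrium is non-increasing and the potential non-decreasing in the price:
if `λ₁ < λ₂`, `x₁ ∈ WE(λ₁)`, `x₂ ∈ WE(λ₂)`, then `G(x₁) ≥ G(x₂)` and `Φ(x₁) ≤ Φ(x₂)`. -/
theorem externality_monotone_in_price
    [∀ i, Nonempty (P i)]
    (d : I → ℝ) (hd : ∀ i, 0 < d i)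
    (τ : (∀ i, P i → ℝ) → ∀ i, P i → ℝ)
    (Φ : (∀ i, P i → ℝ) → ℝ)
    (hΦdiff : Differentiable ℝ Φ) (hΦconv : ConvexOn ℝ Set.univ Φ)
    (hΦgrad : ∀ x, Feasible d x →
      ∀ i p, fderiv ℝ Φ x (Pi.single i (Pi.single p (1 : ℝ))) = τ x i p)
    (g : ∀ i, P i → ℝ) (hg : ∀ i p, 0 ≤ g i p)
    (lam₁ lam₂ : ℝ) (hlam₁ : 0 ≤ lam₁) (hlt : lam₁ < lam₂)
    (x₁ x₂ : ∀ i, P i → ℝ)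
    (hx₁ : IsWardrop d (fun y i p => τ y i p + lam₁ * g i p) x₁)
    (hx₂ : IsWardrop d (fun y i p => τ y i p + lam₂ * g i p) x₂) :
    Gtot g x₂ ≤ Gtot g x₁ ∧ Φ x₁ ≤ Φ x₂ := by
  -- abbreviations
  have hf₁ : Feasible d x₁ := hx₁.1
  have hf₂ : Feasible d x₂ := hx₂.1
  -- evaluate the derivative of Φ on arbitrary directions at feasible points
  have hfd : ∀ (x : ∀ i, P i → ℝ), Feasible d x → ∀ v : ∀ i, P i → ℝ,
      fderiv ℝ Φ x v = ∑ i, ∑ p, τ x i p * v i p := by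
    intro x hx v
    conv_lhs => rw [← flow_sum_single v]
    rw [map_sum]
    refine Finset.sum_congr rfl fun i _ => ?_
    rw [map_sum]
    refine Finset.sum_congr rfl fun p _ => ?_
    rw [map_smul, hΦgrad x hx i p, smul_eq_mul, mul_comm]
  -- algebraic identity
  have key : ∀ (lam : ℝ) (x y : ∀ i, P i → ℝ),
      (∑ i, ∑ p, (τ x i p + lam * g i p) * y i p)
        - (∑ i, ∑ p, (τ x i p + lam * g i p) * x i p)
      = (∑ i, ∑ p, τ x i p * (y i p - x i p)) + lam * (Gtot g y - Gtot g x) := by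
    intro lam x y
    simp only [Gtot, mul_sub, Finset.mul_sum, ← Finset.sum_sub_distrib,
      ← Finset.sum_add_distrib]
    refine Finset.sum_congr rfl fun i _ => ?_
    refine Finset.sum_congr rfl fun p _ => ?_
    ring
  set A := ∑ i, ∑ p, τ x₁ i p * (x₂ i p - x₁ i p) with hA
  set B := ∑ i, ∑ p, τ x₂ i p * (x₁ i p - x₂ i p) with hB
  -- variational inequalities
  have vi₁ := wardrop_vi d (fun y i p => τ y i p + lam₁ * g i p) x₁ x₂ hx₁ hf₂
  have vi₂ := wardrop_vi d (fun y i p => τ y i p + lam₂ * g i p) x₂ x₁ hx₂ hf₁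
  have h₁ : 0 ≤ A + lam₁ * (Gtot g x₂ - Gtot g x₁) := by
    rw [← key lam₁ x₁ x₂]; simpa using sub_nonneg.mpr vi₁
  have h₂ : 0 ≤ B + lam₂ * (Gtot g x₁ - Gtot g x₂) := by
    rw [← key lam₂ x₂ x₁]; simpa using sub_nonneg.mpr vi₂
  -- gradient inequalities
  have gA : A ≤ Φ x₂ - Φ x₁ := by
    have := convex_grad_ineq hΦdiff hΦconv x₁ x₂
    rw [hfd x₁ hf₁ (x₂ - x₁)] at this
    simpa [Pi.sub_apply] using this
  have gB : B ≤ Φ x₁ - Φ x₂ := by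
    have := convex_grad_ineq hΦdiff hΦconv x₂ x₁
    rw [hfd x₂ hf₂ (x₁ - x₂)] at this
    simpa [Pi.sub_apply] using this
  have hG : Gtot g x₂ ≤ Gtot g x₁ := by nlinarith
  refine ⟨hG, ?_⟩
  nlinarith
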